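/- arXiv:1604.03714 — 2 statements merged into one kernel-verified Lean document; each statement's English description precedes it below -/
import Mathlib

section
/- Let α_i, β_i ∈ ℝ³ be linearly independent, let R : ℝ → 3×3 real matrices take values in the special orthogonal group, and let α̂, β̂ : ℝ → ℝ³ satisfy α̂(t) − R(t)ᵀ α_i → 0 and β̂(t) − R(t)ᵀ β_i → 0 as t → ∞. Define R̃(t)ᵀ as the matrix with columns (α̂(t)/‖α_i‖, (α̂(t) × β̂(t))/‖α_i × β_i‖, (α̂(t) × (α̂(t) × β̂(t)))/‖α_i × (α_i × β_i)‖) multiplied on the right by R_iᵀ. Then R̃(t)ᵀ − R(t)ᵀ → 0 as t → ∞ (in any matrix norm). -/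
open scoped RealInnerProductSpace
open Matrix Filter

noncomputable section

/-- ℝ³ with the Euclidean norm and inner product. -/
abbrev V3 : Type := EuclideanSpace ℝ (Fin 3)

/-- Identity identification of `V3` with plain functions `Fin 3 → ℝ`. -/
def toF (v : V3) : Fin 3 → ℝ := v

/-- Identity identification of plain functions `Fin 3 → ℝ` with `V3`. -/
def toE (v : Fin 3 → ℝ) : V3 := WithLp.toLp 2 v

/-- The cross product on ℝ³. -/
def cross (v w : V3) : V3 := toE (crossProduct (toF v) (toF w))

/-- The skew-symmetric matrix `v_×` with `v_× x = v × x`. -/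
def skew (v : V3) : Matrix (Fin 3) (Fin 3) ℝ :=
  !![0, -(toF v 2), toF v 1; toF v 2, 0, -(toF v 0); -(toF v 1), toF v 0, 0]

/-- Matrix-vector multiplication on `V3`. -/
def mulVecE (M : Matrix (Fin 3) (Fin 3) ℝ) (x : V3) : V3 := toE (M.mulVec (toF x))

/-- The 3×3 matrix whose columns are `v1, v2, v3`. -/
def colMat (v1 v2 v3 : V3) : Matrix (Fin 3) (Fin 3) ℝ :=
  Matrix.of fun i j => toF (![v1, v2, v3] j) i

/-- The matrix `R_i` with columns
`αi/‖αi‖, (αi × βi)/‖αi × βi‖, (αi × (αi × βi))/‖αi × (αi × βi)‖`. -/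
def Rimat (αi βi : V3) : Matrix (Fin 3) (Fin 3) ℝ :=
  colMat ((1 / ‖αi‖) • αi) ((1 / ‖cross αi βi‖) • cross αi βi)
    ((1 / ‖cross αi (cross αi βi)‖) • cross αi (cross αi βi))

/-! ### Auxiliary lemmas -/

lemma normsq_dot (x : V3) : ‖x‖^2 = toF x ⬝ᵥ toF x := by
  rw [← real_inner_self_eq_norm_sq]
  simp [PiLp.inner_apply, dotProduct, toF, RCLike.inner_apply, mul_comm]
  rw [EuclideanSpace.norm_eq, Real.sq_sqrt (by positivity)]
  simp [sq, Real.norm_eq_abs]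

lemma norm_cross_le (u v : V3) : ‖cross u v‖ ≤ ‖u‖ * ‖v‖ := by
  have h : ‖cross u v‖^2 ≤ (‖u‖ * ‖v‖)^2 := by
    have h1 := normsq_dot (cross u v)
    have h4 := cross_dot_cross (toF u) (toF v) (toF u) (toF v)
    have h5 : toF (cross u v) = crossProduct (toF u) (toF v) := rfl
    rw [mul_pow, normsq_dot u, normsq_dot v, h1, h5, h4,
      dotProduct_comm (toF u) (toF v)]
    nlinarith [sq_nonneg (toF v ⬝ᵥ toF u)]
  have h2 := Real.sqrt_le_sqrt h
  rwa [Real.sqrt_sq (norm_nonneg _), Real.sqrt_sq (by positivity)] at h2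

lemma norm_mulVecE (M : Matrix (Fin 3) (Fin 3) ℝ) (h : Mᵀ * M = 1) (x : V3) :
    ‖mulVecE M x‖ = ‖x‖ := by
  have h2 : ‖mulVecE M x‖^2 = ‖x‖^2 := by
    rw [normsq_dot, normsq_dot]
    have h3 : toF (mulVecE M x) = M.mulVec (toF x) := rfl
    rw [h3, dotProduct_mulVec, ← Matrix.mulVec_transpose,
      Matrix.mulVec_mulVec, h, Matrix.one_mulVec]
  calc ‖mulVecE M x‖ = Real.sqrt (‖mulVecE M x‖^2) := (Real.sqrt_sq (norm_nonneg _)).symm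
    _ = Real.sqrt (‖x‖^2) := by rw [h2]
    _ = ‖x‖ := Real.sqrt_sq (norm_nonneg _)

lemma key_id (M : Matrix (Fin 3) (Fin 3) ℝ) (x y : Fin 3 → ℝ) :
    Mᵀ.mulVec (crossProduct (M.mulVec x) (M.mulVec y)) = M.det • crossProduct x y := by
  funext i
  fin_cases i <;>
    simp [crossProduct, Matrix.mulVec, dotProduct, Fin.sum_univ_three,
      Matrix.det_fin_three, Matrix.transpose] <;> ring

lemma cross_mulVecE (M : Matrix (Fin 3) (Fin 3) ℝ) (h1 : Mᵀ * M = 1) (h2 : M.det = 1)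
    (x y : V3) : cross (mulVecE M x) (mulVecE M y) = mulVecE M (cross x y) := by
  have h3 : M * Mᵀ = 1 := mul_eq_one_comm.mp h1
  have h4 := key_id M (toF x) (toF y)
  rw [h2, one_smul] at h4
  show toE (crossProduct (M.mulVec (toF x)) (M.mulVec (toF y)))
      = toE (M.mulVec (crossProduct (toF x) (toF y)))
  rw [← h4, Matrix.mulVec_mulVec, h3, Matrix.one_mulVec]

lemma colMat_sub (a b c a' b' c' : V3) :
    colMat a b c - colMat a' b' c' = colMat (a - a') (b - b') (c - c') := by
  ext i j
  fin_cases j <;> simp [colMat, toF]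

lemma mul_colMat (M : Matrix (Fin 3) (Fin 3) ℝ) (a b c : V3) :
    M * colMat a b c = colMat (mulVecE M a) (mulVecE M b) (mulVecE M c) := by
  ext i j
  fin_cases j <;>
    simp [colMat, toF, mulVecE, toE, Matrix.mul_apply, Matrix.mulVec, dotProduct]

lemma mulVecE_smul (M : Matrix (Fin 3) (Fin 3) ℝ) (c : ℝ) (x : V3) :
    mulVecE M (c • x) = c • mulVecE M x := by
  show toE (M.mulVec (c • toF x)) = c • toE (M.mulVec (toF x))
  rw [Matrix.mulVec_smul]
  rfl

section nz
variable {αi βi : V3} (hind : LinearIndependent ℝ ![αi, βi])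
include hind

lemma alpha_ne : αi ≠ 0 := hind.ne_zero 0

lemma cross_ne : cross αi βi ≠ 0 := by
  have h : LinearIndependent ℝ ![toF αi, toF βi] := by
    have : ![toF αi, toF βi] = (fun v : V3 => toF v) ∘ ![αi, βi] := by
      funext i; fin_cases i <;> rfl
    rw [this]
    exact hind.map' (WithLp.linearEquiv 2 ℝ (Fin 3 → ℝ)).toLinearMap (LinearEquiv.ker _)
  exact fun h0 => (crossProduct_ne_zero_iff_linearIndependent.mpr h) (congrArg toF h0)

lemma cross2_ne : cross αi (cross αi βi) ≠ 0 := by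
  have ha : αi ≠ 0 := alpha_ne hind
  have hc : cross αi βi ≠ 0 := cross_ne hind
  have h : LinearIndependent ℝ ![toF αi, toF (cross αi βi)] := by
    rw [LinearIndependent.pair_iff' (show toF αi ≠ 0 from fun h0 => ha (by simpa [toF] using h0))]
    intro a hEq
    have hd : toF αi ⬝ᵥ toF (cross αi βi) = 0 := dot_self_cross _ _
    rw [← hEq, dotProduct_smul, smul_eq_mul] at hd
    have hdd : toF αi ⬝ᵥ toF αi ≠ 0 := by
      rw [← normsq_dot]
      have : ‖αi‖ ≠ 0 := norm_ne_zero_iff.mpr ha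
      positivity
    have ha0 : a = 0 := by
      rcases mul_eq_zero.mp hd with h' | h'
      · exact h'
      · exact absurd h' hdd
    rw [ha0, zero_smul] at hEq
    exact hc (by simpa [toF] using hEq.symm)
  exact fun h0 => (crossProduct_ne_zero_iff_linearIndependent.mpr h) (congrArg toF h0)
end nz

lemma transpose_colMat_mul (v1 v2 v3 w1 w2 w3 : V3) (j k : Fin 3) :
    ((colMat v1 v2 v3)ᵀ * colMat w1 w2 w3) j k
      = toF (![v1, v2, v3] j) ⬝ᵥ toF (![w1, w2, w3] k) := by
  simp [colMat, Matrix.mul_apply, dotProduct, Matrix.transpose]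

lemma toF_smul (c : ℝ) (v : V3) : toF (c • v) = c • toF v := rfl

lemma smul_dot_smul (c c' : ℝ) (v w : V3) :
    toF (c • v) ⬝ᵥ toF (c' • w) = c * c' * (toF v ⬝ᵥ toF w) := by
  rw [toF_smul, toF_smul, smul_dotProduct, dotProduct_smul,
    smul_eq_mul, smul_eq_mul]
  ring

lemma Rimat_orth {αi βi : V3} (hind : LinearIndependent ℝ ![αi, βi]) :
    (Rimat αi βi)ᵀ * Rimat αi βi = 1 := by
  have ha : ‖αi‖ ≠ 0 := norm_ne_zero_iff.mpr (alpha_ne hind)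
  have hc : ‖cross αi βi‖ ≠ 0 := norm_ne_zero_iff.mpr (cross_ne hind)
  have hcc : ‖cross αi (cross αi βi)‖ ≠ 0 := norm_ne_zero_iff.mpr (cross2_ne hind)
  have d1 : toF αi ⬝ᵥ toF (cross αi βi) = 0 := dot_self_cross _ _
  have d2 : toF αi ⬝ᵥ toF (cross αi (cross αi βi)) = 0 := dot_self_cross _ _
  have d3 : toF (cross αi βi) ⬝ᵥ toF (cross αi (cross αi βi)) = 0 := dot_cross_self _ _
  have d1' : toF (cross αi βi) ⬝ᵥ toF αi = 0 := by rw [dotProduct_comm]; exact d1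
  have d2' : toF (cross αi (cross αi βi)) ⬝ᵥ toF αi = 0 := by
    rw [dotProduct_comm]; exact d2
  have d3' : toF (cross αi (cross αi βi)) ⬝ᵥ toF (cross αi βi) = 0 := by
    rw [dotProduct_comm]; exact d3
  ext j k
  rw [Rimat, transpose_colMat_mul]
  fin_cases j <;> fin_cases k <;>
    simp only [Fin.zero_eta, Fin.mk_one, Fin.reduceFinMk, Fin.isValue,
      Matrix.cons_val_zero, Matrix.cons_val_one, Matrix.head_cons,
      Matrix.cons_val_two, Matrix.tail_cons, smul_dot_smul, Matrix.one_apply,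
      reduceIte] <;>
    first
      | (rw [← normsq_dot]; field_simp)
      | (rw [d1]; simp)
      | (rw [d2]; simp)
      | (rw [d3]; simp)
      | (rw [d1']; simp)
      | (rw [d2']; simp)
      | (rw [d3']; simp)

/-! ### Bilinearity of the cross product -/

lemma cross_sub_left (u v w : V3) : cross (u - v) w = cross u w - cross v w := by
  show toE (crossProduct (toF u - toF v) (toF w)) = _
  rw [map_sub]
  rfl

lemma cross_sub_right (u v w : V3) : cross u (v - w) = cross u v - cross u w := by
  show toE (crossProduct (toF u) (toF v - toF w)) = _
  rw [map_sub]
  rfl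

lemma norm_cross_comm (u v : V3) : ‖cross u v‖ = ‖cross v u‖ := by
  rw [← norm_neg]
  congr 1
  show -(toE (crossProduct (toF u) (toF v))) = toE (crossProduct (toF v) (toF u))
  show toE (-(crossProduct (toF u) (toF v))) = toE (crossProduct (toF v) (toF u))
  exact congrArg toE (cross_anticomm _ _)

/-! ### Limit lemmas -/

lemma tendsto_cross_zero_left {u v : ℝ → V3} {C : ℝ}
    (hu : Tendsto u atTop (nhds 0)) (hv : ∀ᶠ t in atTop, ‖v t‖ ≤ C) :
    Tendsto (fun t => cross (u t) (v t)) atTop (nhds 0) := by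
  apply squeeze_zero_norm' (a := fun t => ‖u t‖ * C)
  · filter_upwards [hv] with t ht
    exact (norm_cross_le _ _).trans (mul_le_mul_of_nonneg_left ht (norm_nonneg _))
  · have h1 : Tendsto (fun t => ‖u t‖) atTop (nhds 0) := by
      simpa using hu.norm
    simpa using h1.mul_const C

lemma tendsto_cross_zero_right {u v : ℝ → V3} {C : ℝ}
    (hv : Tendsto v atTop (nhds 0)) (hu : ∀ᶠ t in atTop, ‖u t‖ ≤ C) :
    Tendsto (fun t => cross (u t) (v t)) atTop (nhds 0) := by
  apply squeeze_zero_norm' (a := fun t => ‖v t‖ * C)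
  · filter_upwards [hu] with t ht
    refine le_trans ?_ (mul_le_mul_of_nonneg_left ht (norm_nonneg _))
    rw [norm_cross_comm]
    exact norm_cross_le _ _
  · have h1 : Tendsto (fun t => ‖v t‖) atTop (nhds 0) := by
      simpa using hv.norm
    simpa using h1.mul_const C

lemma tendsto_colMat_zero {f g h : ℝ → V3}
    (hf : Tendsto f atTop (nhds 0)) (hg : Tendsto g atTop (nhds 0))
    (hh : Tendsto h atTop (nhds 0)) :
    Tendsto (fun t => colMat (f t) (g t) (h t)) atTop (nhds 0) := by
  refine tendsto_pi_nhds.mpr ?_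
  intro i
  rw [tendsto_pi_nhds]
  intro j
  have key : ∀ {u : ℝ → V3}, Tendsto u atTop (nhds 0) →
      Tendsto (fun t => toF (u t) i) atTop (nhds 0) := by
    intro u hu
    have := ((EuclideanSpace.proj (𝕜 := ℝ) i).continuous.tendsto 0).comp hu
    exact this
  fin_cases j
  · simpa [colMat] using key hf
  · simpa [colMat] using key hg
  · simpa [colMat] using key hh


lemma recon_exact {αi βi : V3} (hind : LinearIndependent ℝ ![αi, βi])
    (Q : Matrix (Fin 3) (Fin 3) ℝ) (h1 : Qᵀ * Q = 1) (h2 : Q.det = 1) :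
    Q = colMat ((1 / ‖αi‖) • mulVecE Q αi)
          ((1 / ‖cross αi βi‖) • cross (mulVecE Q αi) (mulVecE Q βi))
          ((1 / ‖cross αi (cross αi βi)‖) •
            cross (mulVecE Q αi) (cross (mulVecE Q αi) (mulVecE Q βi))) *
        (Rimat αi βi)ᵀ := by
  have hRiorth : (Rimat αi βi)ᵀ * Rimat αi βi = 1 := Rimat_orth hind
  have hRi2 : Rimat αi βi * (Rimat αi βi)ᵀ = 1 := mul_eq_one_comm.mp hRiorth
  rw [cross_mulVecE Q h1 h2, cross_mulVecE Q h1 h2, ← mulVecE_smul, ← mulVecE_smul,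
    ← mulVecE_smul, ← mul_colMat, ← Rimat, Matrix.mul_assoc, hRi2, Matrix.mul_one]

/-- If `α̂(t) − R(t)ᵀ αi → 0` and `β̂(t) − R(t)ᵀ βi → 0`, then the reconstructed
matrix `R̃(t)ᵀ` converges to `R(t)ᵀ`, i.e. `R̃(t)ᵀ − R(t)ᵀ → 0`. -/
theorem attitude_reconstruction_convergence
    (αi βi : V3) (hind : LinearIndependent ℝ ![αi, βi])
    (R : ℝ → Matrix (Fin 3) (Fin 3) ℝ)
    (hR : ∀ t, (R t)ᵀ * R t = 1 ∧ (R t).det = 1)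
    (ahat bhat : ℝ → V3)
    (ha : Tendsto (fun t => ahat t - mulVecE (R t)ᵀ αi) atTop (nhds 0))
    (hb : Tendsto (fun t => bhat t - mulVecE (R t)ᵀ βi) atTop (nhds 0)) :
    Tendsto (fun t =>
        colMat ((1 / ‖αi‖) • ahat t)
            ((1 / ‖cross αi βi‖) • cross (ahat t) (bhat t))
            ((1 / ‖cross αi (cross αi βi)‖) • cross (ahat t) (cross (ahat t) (bhat t)))
          * (Rimat αi βi)ᵀ - (R t)ᵀ)
      atTop (nhds 0) := by
  set Ri := Rimat αi βi with hRi
  have hRiorth : Riᵀ * Ri = 1 := Rimat_orth hind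
  have hRi2 : Ri * Riᵀ = 1 := mul_eq_one_comm.mp hRiorth
  have hQ : ∀ t, ((R t)ᵀ)ᵀ * (R t)ᵀ = 1 := fun t => by
    rw [Matrix.transpose_transpose]
    exact mul_eq_one_comm.mp (hR t).1
  have hdet : ∀ t, ((R t)ᵀ).det = 1 := fun t => by
    rw [Matrix.det_transpose]; exact (hR t).2
  set a₀ : ℝ → V3 := fun t => mulVecE (R t)ᵀ αi with ha₀
  set b₀ : ℝ → V3 := fun t => mulVecE (R t)ᵀ βi with hb₀
  have hcr : ∀ t, cross (a₀ t) (b₀ t) = mulVecE (R t)ᵀ (cross αi βi) := fun t =>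
    cross_mulVecE _ (hQ t) (hdet t) _ _
  have hcr2 : ∀ t, cross (a₀ t) (cross (a₀ t) (b₀ t))
      = mulVecE (R t)ᵀ (cross αi (cross αi βi)) := fun t => by
    rw [hcr t]
    exact cross_mulVecE _ (hQ t) (hdet t) _ _
  -- the reconstructed matrix built from the "true" vectors equals `R tᵀ`
  have hident : ∀ t, (R t)ᵀ
      = colMat ((1 / ‖αi‖) • a₀ t) ((1 / ‖cross αi βi‖) • cross (a₀ t) (b₀ t))
          ((1 / ‖cross αi (cross αi βi)‖) • cross (a₀ t) (cross (a₀ t) (b₀ t))) * Riᵀ := by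
    intro t
    exact recon_exact hind _ (hQ t) (hdet t)
  -- difference vectors
  set d1 : ℝ → V3 := fun t => (1 / ‖αi‖) • (ahat t - a₀ t) with hd1def
  set d2 : ℝ → V3 := fun t =>
    (1 / ‖cross αi βi‖) • (cross (ahat t) (bhat t) - cross (a₀ t) (b₀ t)) with hd2def
  set d3 : ℝ → V3 := fun t =>
    (1 / ‖cross αi (cross αi βi)‖) •
      (cross (ahat t) (cross (ahat t) (bhat t)) - cross (a₀ t) (cross (a₀ t) (b₀ t)))
    with hd3def
  have heq : (fun t =>
        colMat ((1 / ‖αi‖) • ahat t)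
            ((1 / ‖cross αi βi‖) • cross (ahat t) (bhat t))
            ((1 / ‖cross αi (cross αi βi)‖) • cross (ahat t) (cross (ahat t) (bhat t)))
          * Riᵀ - (R t)ᵀ)
      = fun t => colMat (d1 t) (d2 t) (d3 t) * Riᵀ := by
    funext t
    rw [hident t, ← Matrix.sub_mul, colMat_sub, ← smul_sub, ← smul_sub, ← smul_sub]
  rw [heq]
  -- norms of the "true" vectors are constant
  have hna : ∀ t, ‖a₀ t‖ = ‖αi‖ := fun t => norm_mulVecE _ (hQ t) _
  have hnb : ∀ t, ‖b₀ t‖ = ‖βi‖ := fun t => norm_mulVecE _ (hQ t) _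
  have hncr : ∀ t, ‖cross (a₀ t) (b₀ t)‖ = ‖cross αi βi‖ := fun t => by
    rw [hcr t]; exact norm_mulVecE _ (hQ t) _
  -- d2 tends to zero
  have hd2' : Tendsto (fun t => cross (ahat t) (bhat t) - cross (a₀ t) (b₀ t))
      atTop (nhds 0) := by
    have hdecomp : ∀ t, cross (ahat t) (bhat t) - cross (a₀ t) (b₀ t)
        = cross (ahat t - a₀ t) (b₀ t) + cross (a₀ t) (bhat t - b₀ t)
          + cross (ahat t - a₀ t) (bhat t - b₀ t) := by
      intro t
      rw [cross_sub_left, cross_sub_right, cross_sub_left, cross_sub_right,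
        cross_sub_right]
      abel
    simp only [hdecomp]
    have T1 : Tendsto (fun t => cross (ahat t - a₀ t) (b₀ t)) atTop (nhds 0) :=
      tendsto_cross_zero_left ha (Eventually.of_forall fun t => (hnb t).le)
    have T2 : Tendsto (fun t => cross (a₀ t) (bhat t - b₀ t)) atTop (nhds 0) :=
      tendsto_cross_zero_right hb (Eventually.of_forall fun t => (hna t).le)
    have hbb : ∀ᶠ t in atTop, ‖bhat t - b₀ t‖ ≤ 1 := by
      have := hb.norm
      simp only [norm_zero] at this
      exact this.eventually (eventually_le_nhds zero_lt_one)
    have T3 : Tendsto (fun t => cross (ahat t - a₀ t) (bhat t - b₀ t)) atTop (nhds 0) :=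
      tendsto_cross_zero_left ha hbb
    simpa using (T1.add T2).add T3
  -- eventual bound for `cross ahat bhat`
  have hvbound : ∀ᶠ t in atTop, ‖cross (ahat t) (bhat t)‖ ≤ ‖cross αi βi‖ + 1 := by
    have h1 : ∀ᶠ t in atTop, ‖cross (ahat t) (bhat t) - cross (a₀ t) (b₀ t)‖ ≤ 1 := by
      have := hd2'.norm
      simp only [norm_zero] at this
      exact this.eventually (eventually_le_nhds zero_lt_one)
    filter_upwards [h1] with t ht
    calc ‖cross (ahat t) (bhat t)‖
        ≤ ‖cross (a₀ t) (b₀ t)‖ + ‖cross (ahat t) (bhat t) - cross (a₀ t) (b₀ t)‖ := by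
          have := norm_add_le (cross (a₀ t) (b₀ t))
            (cross (ahat t) (bhat t) - cross (a₀ t) (b₀ t))
          simpa using this
      _ ≤ ‖cross αi βi‖ + 1 := by rw [hncr t]; exact add_le_add le_rfl ht
  -- d3 tends to zero
  have hd3' : Tendsto (fun t =>
      cross (ahat t) (cross (ahat t) (bhat t)) - cross (a₀ t) (cross (a₀ t) (b₀ t)))
      atTop (nhds 0) := by
    have hdecomp : ∀ t,
        cross (ahat t) (cross (ahat t) (bhat t)) - cross (a₀ t) (cross (a₀ t) (b₀ t))
          = cross (ahat t - a₀ t) (cross (ahat t) (bhat t))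
            + cross (a₀ t) (cross (ahat t) (bhat t) - cross (a₀ t) (b₀ t)) := by
      intro t
      rw [cross_sub_left, cross_sub_right]
      abel
    simp only [hdecomp]
    have T1 : Tendsto (fun t => cross (ahat t - a₀ t) (cross (ahat t) (bhat t)))
        atTop (nhds 0) := tendsto_cross_zero_left ha hvbound
    have T2 : Tendsto (fun t =>
        cross (a₀ t) (cross (ahat t) (bhat t) - cross (a₀ t) (b₀ t))) atTop (nhds 0) :=
      tendsto_cross_zero_right hd2' (Eventually.of_forall fun t => (hna t).le)
    simpa using T1.add T2
  -- assemble
  have hd1 : Tendsto d1 atTop (nhds 0) := by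
    have := ha.const_smul (1 / ‖αi‖)
    simpa [hd1def] using this
  have hd2 : Tendsto d2 atTop (nhds 0) := by
    have := hd2'.const_smul (1 / ‖cross αi βi‖)
    simpa [hd2def] using this
  have hd3 : Tendsto d3 atTop (nhds 0) := by
    have := hd3'.const_smul (1 / ‖cross αi (cross αi βi)‖)
    simpa [hd3def] using this
  have hcm : Tendsto (fun t => colMat (d1 t) (d2 t) (d3 t)) atTop (nhds 0) :=
    tendsto_colMat_zero hd1 hd2 hd3
  have := hcm.mul (tendsto_const_nhds (x := Riᵀ) (f := atTop))
  simpa using this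
end
end

section
/- Let α_i ∈ ℝ³, k_α ∈ ℝ, and let ω, e_α, e_b : ℝ → ℝ³ be differentiable. Let R : ℝ → 3×3 real matrices be differentiable with R(t) special orthogonal for every t and R'(t) = R(t) · ω(t)_×. Suppose e_α satisfies e_α'(t) = e_α(t) × ω(t) − (α(t) + e_α(t)) × e_b(t) − k_α e_α(t), where α(t) := R(t)ᵀ α_i. Then E_α(t) := R(t) e_α(t) satisfies E_α'(t) = E_b(t) × (α_i + E_α(t)) − k_α E_α(t), where E_b(t) := R(t) e_b(t). -/
open scoped RealInnerProductSpace
open Matrix Filter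

noncomputable section

/-- Cofactor identity: `Mᵀ ((Mv) × (Mw)) = det M • (v × w)` for any `M`. -/
lemma aux_det (M : Matrix (Fin 3) (Fin 3) ℝ) (v w : Fin 3 → ℝ) :
    Mᵀ.mulVec (crossProduct (M.mulVec v) (M.mulVec w)) = M.det • crossProduct v w := by
  funext i
  fin_cases i <;>
    simp [Matrix.mulVec, Matrix.det_fin_three, crossProduct, dotProduct,
      Fin.sum_univ_three, Matrix.transpose_apply, Matrix.vecHead, Matrix.vecTail] <;> ring

/-- Cross-product equivariance under special orthogonal matrices. -/
lemma cross_equiv (M : Matrix (Fin 3) (Fin 3) ℝ) (hM : Mᵀ * M = 1) (hdet : M.det = 1)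
    (v w : Fin 3 → ℝ) :
    M.mulVec (crossProduct v w) = crossProduct (M.mulVec v) (M.mulVec w) := by
  have hMMt : M * Mᵀ = 1 := mul_eq_one_comm.mp hM
  have h := aux_det M v w
  rw [hdet, one_smul] at h
  calc M.mulVec (crossProduct v w)
      = M.mulVec (Mᵀ.mulVec (crossProduct (M.mulVec v) (M.mulVec w))) := by rw [h]
    _ = (M * Mᵀ).mulVec (crossProduct (M.mulVec v) (M.mulVec w)) := by
        rw [Matrix.mulVec_mulVec]
    _ = _ := by rw [hMMt, Matrix.one_mulVec]

/-- The skew matrix acts as the cross product. -/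
lemma skew_mulVec (v : V3) (x : Fin 3 → ℝ) :
    (skew v).mulVec x = crossProduct (toF v) x := by
  funext i
  fin_cases i <;>
    simp [skew, Matrix.mulVec, crossProduct, dotProduct, Fin.sum_univ_three, Matrix.vecHead, Matrix.vecTail] <;> ring

/-- The main algebraic identity, in `Fin 3 → ℝ` form. -/
lemma key_alg (Rt : Matrix (Fin 3) (Fin 3) ℝ) (hR : Rtᵀ * Rt = 1) (hdet : Rt.det = 1)
    (v ea eb ai : Fin 3 → ℝ) (k : ℝ) :
    (Rt * skew (toE v)).mulVec ea
      + Rt.mulVec (crossProduct ea v - crossProduct (Rtᵀ.mulVec ai + ea) eb - k • ea)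
    = crossProduct (Rt.mulVec eb) (ai + Rt.mulVec ea) - k • Rt.mulVec ea := by
  have hMMt : Rt * Rtᵀ = 1 := mul_eq_one_comm.mp hR
  have hai : Rt.mulVec (Rtᵀ.mulVec ai) = ai := by
    rw [Matrix.mulVec_mulVec, hMMt, Matrix.one_mulVec]
  rw [← Matrix.mulVec_mulVec, skew_mulVec]
  have htoF : toF (toE v) = v := rfl
  rw [htoF, Matrix.mulVec_sub, Matrix.mulVec_sub, Matrix.mulVec_smul,
    cross_equiv Rt hR hdet, cross_equiv Rt hR hdet, cross_equiv Rt hR hdet,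
    Matrix.mulVec_add, hai]
  rw [← cross_anticomm (ai + Rt.mulVec ea) (Rt.mulVec eb),
    ← cross_anticomm (Rt.mulVec ea) (Rt.mulVec v)]
  abel

/-- If `Ṙ = R ω_×` with `R` special orthogonal and
`ė_α = e_α × ω − (α + e_α) × e_b − kα e_α` with `α = Rᵀ αi`, then
`E_α := R e_α` satisfies `Ė_α = E_b × (αi + E_α) − kα E_α`, where `E_b := R e_b`. -/
theorem rotated_error_equation
    (αi : V3) (kα : ℝ) (ω eα eb : ℝ → V3)
    (hω : Differentiable ℝ ω) (heα_diff : Differentiable ℝ eα)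
    (heb : Differentiable ℝ eb)
    (R : ℝ → Matrix (Fin 3) (Fin 3) ℝ)
    (hRso : ∀ t, (R t)ᵀ * R t = 1 ∧ (R t).det = 1)
    (hRder : ∀ t i j, HasDerivAt (fun s => R s i j) ((R t * skew (ω t)) i j) t)
    (heα : ∀ t, HasDerivAt eα
      (cross (eα t) (ω t) - cross (mulVecE (R t)ᵀ αi + eα t) (eb t) - kα • eα t) t) :
    ∀ t, HasDerivAt (fun s => mulVecE (R s) (eα s))
      (cross (mulVecE (R t) (eb t)) (αi + mulVecE (R t) (eα t))
        - kα • mulVecE (R t) (eα t)) t := by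
  intro t
  set D : V3 := cross (eα t) (ω t) - cross (mulVecE (R t)ᵀ αi + eα t) (eb t) - kα • eα t
    with hD
  -- componentwise derivatives of eα
  have hproj : ∀ j : Fin 3, HasDerivAt (fun s => eα s j) (D j) t := by
    intro j
    have := (EuclideanSpace.proj (𝕜 := ℝ) j).hasFDerivAt.comp_hasDerivAt t (heα t)
    simpa [hD, Function.comp_def] using this
  -- componentwise derivatives of R eα
  have hcomp : ∀ i : Fin 3,
      HasDerivAt (fun s => (R s).mulVec (toF (eα s)) i)
        (∑ j, ((R t * skew (ω t)) i j * eα t j + R t i j * D j)) t := by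
    intro i
    have h : HasDerivAt (fun s => ∑ j, R s i j * eα s j)
        (∑ j, ((R t * skew (ω t)) i j * eα t j + R t i j * D j)) t :=
      HasDerivAt.fun_sum fun j _ => (hRder t i j).mul (hproj j)
    convert h using 1
    funext s
    rfl
  -- assemble into a Pi-type derivative
  have hpi : HasDerivAt (fun s => ((R s).mulVec (toF (eα s)) : Fin 3 → ℝ))
      (fun i => ∑ j, ((R t * skew (ω t)) i j * eα t j + R t i j * D j)) t :=
    hasDerivAt_pi.mpr hcomp
  -- transfer to V3 via the continuous linear equivalence
  have hE : HasDerivAt (fun s => mulVecE (R s) (eα s))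
      (toE fun i => ∑ j, ((R t * skew (ω t)) i j * eα t j + R t i j * D j)) t := by
    have := ((EuclideanSpace.equiv (Fin 3) ℝ).symm.toContinuousLinearMap).hasFDerivAt.comp_hasDerivAt
      t hpi
    exact this
  -- rewrite the derivative using the algebraic identity
  convert hE using 1
  have halg := key_alg (R t) (hRso t).1 (hRso t).2 (toF (ω t)) (toF (eα t)) (toF (eb t))
    (toF αi) kα
  ext i
  show (cross (mulVecE (R t) (eb t)) (αi + mulVecE (R t) (eα t))
      - kα • mulVecE (R t) (eα t)) i = _
  have hDF : (toF D : Fin 3 → ℝ)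
      = crossProduct (toF (eα t)) (toF (ω t))
        - crossProduct ((R t)ᵀ.mulVec (toF αi) + toF (eα t)) (toF (eb t))
        - kα • (toF (eα t)) := by
    funext m
    simp [hD, cross, mulVecE, toE, toF, PiLp.sub_apply, PiLp.add_apply, PiLp.smul_apply]
  have hL : ((R t * skew (ω t)).mulVec (toF (eα t))
      + (R t).mulVec (toF D)) i
      = (crossProduct ((R t).mulVec (toF (eb t))) (toF αi + (R t).mulVec (toF (eα t)))
        - kα • (R t).mulVec (toF (eα t))) i := by
    rw [hDF]
    have : skew (ω t) = skew (toE (toF (ω t))) := rfl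
    rw [this, halg]
  calc (cross (mulVecE (R t) (eb t)) (αi + mulVecE (R t) (eα t))
        - kα • mulVecE (R t) (eα t)) i
      = (crossProduct ((R t).mulVec (toF (eb t))) (toF αi + (R t).mulVec (toF (eα t)))
          - kα • (R t).mulVec (toF (eα t))) i := by
        simp [cross, mulVecE, toE, toF, PiLp.sub_apply, PiLp.add_apply, PiLp.smul_apply]
    _ = ((R t * skew (ω t)).mulVec (toF (eα t)) + (R t).mulVec (toF D)) i := hL.symm
    _ = ∑ j, ((R t * skew (ω t)) i j * eα t j + R t i j * D j) := by
        simp [Matrix.mulVec, dotProduct, toF, Finset.sum_add_distrib]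
end
end
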